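/- Let π be a monotone, sublinear functional on L(𝒜) satisfying 𝔪(π) < ∞, where 𝔪(π) is the supremum of (Σᵢ₌₁ᴺ aᵢ π(fᵢ) − π(Σᵢ₌₁ᴺ aᵢ fᵢ)) / π(Σᵢ₌₁ᴺ aᵢ fᵢ) over all convex combinations (aᵢ ≥ 0, Σ aᵢ = 1) of nonnegative elements f₁, …, f_N of L(𝒜) with π(Σᵢ aᵢ fᵢ) > 0. Then there exists a strictly π-positive, π-dominated finitely additive nonnegative set function m on 𝒜. -/

import Mathlib

/-- An algebra of subsets of `Ω`: contains `∅` and `univ`, closed under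
complements and finite unions. -/
def IsSetAlgebra {Ω : Type*} (𝒜 : Set (Set Ω)) : Prop :=
  ∅ ∈ 𝒜 ∧ Set.univ ∈ 𝒜 ∧ (∀ A ∈ 𝒜, Aᶜ ∈ 𝒜) ∧ ∀ A ∈ 𝒜, ∀ B ∈ 𝒜, A ∪ B ∈ 𝒜

/-- `sFun β = (1/|β|) ∑_{B ∈ β} 1_B` for a finite sequence (list) of sets `β`. -/
noncomputable def sFun {Ω : Type*} (β : List (Set Ω)) : Ω → ℝ := fun ω =>
  (β.map fun B => B.indicator (fun _ => (1 : ℝ)) ω).sum / β.length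

/-- `L(𝒜)`: the linear span of the indicators of sets in `𝒜`. -/
def LSpan {Ω : Type*} (𝒜 : Set (Set Ω)) : Submodule ℝ (Ω → ℝ) :=
  Submodule.span ℝ {f | ∃ A ∈ 𝒜, f = A.indicator fun _ => (1 : ℝ)}

/-- `π` is monotone on `L(𝒜)`. -/
def MonotoneOnL {Ω : Type*} (𝒜 : Set (Set Ω)) (π : (Ω → ℝ) → ℝ) : Prop :=
  ∀ f ∈ LSpan 𝒜, ∀ g ∈ LSpan 𝒜, f ≤ g → π f ≤ π g

/-- `π` is sublinear on `L(𝒜)`: subadditive and positively homogeneous. -/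
def SublinearOnL {Ω : Type*} (𝒜 : Set (Set Ω)) (π : (Ω → ℝ) → ℝ) : Prop :=
  (∀ f ∈ LSpan 𝒜, ∀ g ∈ LSpan 𝒜, π (f + g) ≤ π f + π g) ∧
    ∀ c : ℝ, 0 ≤ c → ∀ f ∈ LSpan 𝒜, π (c • f) = c * π f

/-- A nonnegative finitely additive set function on the algebra `𝒜`. -/
def IsFANonneg {Ω : Type*} (𝒜 : Set (Set Ω)) (m : Set Ω → ℝ) : Prop :=
  (∀ A ∈ 𝒜, 0 ≤ m A) ∧ m ∅ = 0 ∧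
    ∀ A ∈ 𝒜, ∀ B ∈ 𝒜, Disjoint A B → m (A ∪ B) = m A + m B

/-- `𝒩(π) = {A ∈ 𝒜 : π(1_A) = 0}`. -/
def NullPi {Ω : Type*} (𝒜 : Set (Set Ω)) (π : (Ω → ℝ) → ℝ) : Set (Set Ω) :=
  {A ∈ 𝒜 | π (A.indicator fun _ => (1 : ℝ)) = 0}

/-- `m` is `π`-dominated: `m(A) ≤ π(1_A)` for all `A ∈ 𝒜`. -/
def PiDominated {Ω : Type*} (𝒜 : Set (Set Ω)) (π : (Ω → ℝ) → ℝ) (m : Set Ω → ℝ) : Prop :=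
  ∀ A ∈ 𝒜, m A ≤ π (A.indicator fun _ => (1 : ℝ))

/-- `m` is strictly `π`-positive: `𝒩(m) ⊆ 𝒩(π)`. -/
def StrictlyPiPositive {Ω : Type*} (𝒜 : Set (Set Ω)) (π : (Ω → ℝ) → ℝ) (m : Set Ω → ℝ) : Prop :=
  ∀ A ∈ 𝒜, m A = 0 → π (A.indicator fun _ => (1 : ℝ)) = 0

/-- `I_π(𝓑) = inf over nonempty finite sequences β from 𝓑 of π(s(β))`. -/
noncomputable def interNumPi {Ω : Type*} (π : (Ω → ℝ) → ℝ) (𝓑 : Set (Set Ω)) : ℝ :=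
  sInf {r | ∃ β : List (Set Ω), β ≠ [] ∧ (∀ B ∈ β, B ∈ 𝓑) ∧ r = π (sFun β)}

namespace KelleyAux

open Set Finset Pointwise

variable {Ω : Type*}

noncomputable def ind (A : Set Ω) : Ω → ℝ := A.indicator fun _ => (1 : ℝ)

lemma ind_nonneg (A : Set Ω) : (0 : Ω → ℝ) ≤ ind A := by
  intro ω; by_cases h : ω ∈ A <;> simp [ind, h]

lemma ind_le_univ (A : Set Ω) : ind A ≤ ind (univ : Set Ω) := by
  intro ω; by_cases h : ω ∈ A <;> simp [ind, h]

lemma memL {𝒜 : Set (Set Ω)} {A : Set Ω} (hA : A ∈ 𝒜) : ind A ∈ LSpan 𝒜 :=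
  Submodule.subset_span ⟨A, hA, rfl⟩

variable {𝒜 : Set (Set Ω)} {π : (Ω → ℝ) → ℝ}

lemma pi_zero (hsub : SublinearOnL 𝒜 π) : π 0 = 0 := by
  have := hsub.2 0 le_rfl 0 (Submodule.zero_mem _)
  simpa using this

lemma pi_nonneg (hmono : MonotoneOnL 𝒜 π) (hsub : SublinearOnL 𝒜 π)
    {f : Ω → ℝ} (hf : f ∈ LSpan 𝒜) (h : 0 ≤ f) : 0 ≤ π f := by
  have h0 := pi_zero hsub
  have := hmono 0 (Submodule.zero_mem _) f hf h
  linarith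

lemma lemX (h𝒜 : IsSetAlgebra 𝒜) (hmono : MonotoneOnL 𝒜 π) (hsub : SublinearOnL 𝒜 π)
    (M : ℝ) (hM0 : 0 ≤ M)
    (hfin : ∀ (N : ℕ) (a : Fin N → ℝ) (f : Fin N → Ω → ℝ),
      (∀ i, 0 ≤ a i) → (∑ i, a i) = 1 → (∀ i, f i ∈ LSpan 𝒜) → (∀ i, 0 ≤ f i) →
      0 < π (∑ i, a i • f i) →
      ((∑ i, a i * π (f i)) - π (∑ i, a i • f i)) / π (∑ i, a i • f i) ≤ M)
    (hπ1 : 0 < π (ind (univ : Set Ω))) :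
    ∀ (N : ℕ) (a : Fin N → ℝ) (f : Fin N → Ω → ℝ),
      (∀ i, 0 ≤ a i) → (∑ i, a i) = 1 → (∀ i, f i ∈ LSpan 𝒜) → (∀ i, 0 ≤ f i) →
      (∑ i, a i * π (f i)) ≤ (1 + M) * π (∑ i, a i • f i) := by
  intro N a f ha hsum hfL hf0
  set s : Ω → ℝ := ∑ i, a i • f i with hs
  have hsL : s ∈ LSpan 𝒜 := Submodule.sum_mem _ fun i _ => Submodule.smul_mem _ _ (hfL i)
  have hs0 : (0 : Ω → ℝ) ≤ s := by
    intro ω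
    have : s ω = ∑ i, a i * f i ω := by
      rw [hs, Finset.sum_apply]
      exact Finset.sum_congr rfl fun i _ => rfl
    rw [this]
    exact Finset.sum_nonneg fun i _ => mul_nonneg (ha i) (hf0 i ω)
  have hπs : 0 ≤ π s := pi_nonneg hmono hsub hsL hs0
  set S : ℝ := ∑ i, a i * π (f i) with hS
  set P1 : ℝ := π (ind (univ : Set Ω)) with hP1
  have hunivL : ind (univ : Set Ω) ∈ LSpan 𝒜 := memL h𝒜.2.1
  have key : ∀ ε : ℝ, 0 < ε → ε < 1 →
      S - (1 + M) * π s ≤ ε * (M * P1 + (S - (1 + M) * π s)) := by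
    intro ε hε hε1
    set a' : Fin (N + 1) → ℝ := Fin.snoc (fun i => (1 - ε) * a i) ε with ha'
    set f' : Fin (N + 1) → Ω → ℝ := Fin.snoc f (ind (univ : Set Ω)) with hf'
    have ha'0 : ∀ i, 0 ≤ a' i := by
      intro i
      induction i using Fin.lastCases with
      | last => simp [ha', hε.le]
      | cast j => simp only [ha', Fin.snoc_castSucc]; exact mul_nonneg (by linarith) (ha j)
    have hsum' : ∑ i, a' i = 1 := by
      rw [Fin.sum_univ_castSucc]
      simp only [ha', Fin.snoc_castSucc, Fin.snoc_last]
      rw [← Finset.mul_sum, hsum]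
      ring
    have hf'L : ∀ i, f' i ∈ LSpan 𝒜 := by
      intro i
      induction i using Fin.lastCases with
      | last => simpa [hf'] using hunivL
      | cast j => simpa [hf'] using hfL j
    have hf'0 : ∀ i, 0 ≤ f' i := by
      intro i
      induction i using Fin.lastCases with
      | last => simpa [hf'] using ind_nonneg (univ : Set Ω)
      | cast j => simpa [hf'] using hf0 j
    have hg : (∑ i, a' i • f' i) = (1 - ε) • s + ε • ind (univ : Set Ω) := by
      rw [Fin.sum_univ_castSucc]
      simp only [ha', hf', Fin.snoc_castSucc, Fin.snoc_last]
      congr 1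
      rw [hs, Finset.smul_sum]
      exact Finset.sum_congr rfl fun j _ => (mul_smul _ _ _)
    have hπε : π (ε • ind (univ : Set Ω)) = ε * P1 := hsub.2 ε hε.le _ hunivL
    have hsmul1L : (1 - ε) • s ∈ LSpan 𝒜 := Submodule.smul_mem _ _ hsL
    have hsmul2L : ε • ind (univ : Set Ω) ∈ LSpan 𝒜 := Submodule.smul_mem _ _ hunivL
    have hgL : (∑ i, a' i • f' i) ∈ LSpan 𝒜 := by
      rw [hg]; exact Submodule.add_mem _ hsmul1L hsmul2L
    have hπg_pos : 0 < π (∑ i, a' i • f' i) := by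
      have hle : ε • ind (univ : Set Ω) ≤ ∑ i, a' i • f' i := by
        rw [hg]
        intro ω
        have h1 : 0 ≤ ((1 - ε) • s) ω := by
          have : ((1 - ε) • s) ω = (1 - ε) * s ω := rfl
          rw [this]; exact mul_nonneg (by linarith) (hs0 ω)
        simp only [Pi.add_apply]
        linarith
      have := hmono _ hsmul2L _ hgL hle
      calc (0:ℝ) < ε * P1 := mul_pos hε hπ1
        _ = π (ε • ind (univ : Set Ω)) := hπε.symm
        _ ≤ _ := this
    have hratio := hfin (N + 1) a' f' ha'0 hsum' hf'L hf'0 hπg_pos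
    have h1 : (∑ i, a' i * π (f' i)) - π (∑ i, a' i • f' i) ≤ M * π (∑ i, a' i • f' i) :=
      (div_le_iff₀ hπg_pos).mp hratio
    have hSa' : ∑ i, a' i * π (f' i) = (1 - ε) * S + ε * P1 := by
      rw [Fin.sum_univ_castSucc]
      simp only [ha', hf', Fin.snoc_castSucc, Fin.snoc_last]
      rw [hS, Finset.mul_sum]
      congr 1
      exact Finset.sum_congr rfl fun j _ => by ring
    have hπg_le : π (∑ i, a' i • f' i) ≤ (1 - ε) * π s + ε * P1 := by
      rw [hg]
      refine (hsub.1 _ hsmul1L _ hsmul2L).trans ?_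
      rw [hsub.2 (1 - ε) (by linarith) s hsL, hπε]
    have h2 : (1 - ε) * S + ε * P1 ≤ (1 + M) * ((1 - ε) * π s + ε * P1) := by
      have h3 : (1 - ε) * S + ε * P1 ≤ (1 + M) * π (∑ i, a' i • f' i) := by
        rw [← hSa']; linarith
      exact h3.trans (mul_le_mul_of_nonneg_left hπg_le (by linarith))
    nlinarith [h2]
  by_contra hcon
  push_neg at hcon
  set d : ℝ := S - (1 + M) * π s with hd
  have hdpos : 0 < d := by rw [hd]; linarith
  have hC : 0 ≤ M * P1 := mul_nonneg hM0 hπ1.le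
  have hCd : 0 < M * P1 + d := by linarith
  set ε : ℝ := d / (2 * (M * P1 + d)) with hεdef
  have hε : 0 < ε := div_pos hdpos (by linarith)
  have hε1 : ε < 1 := by
    rw [hεdef, div_lt_one (by linarith)]
    linarith
  have := key ε hε hε1
  have heq : ε * (M * P1 + d) = d / 2 := by
    rw [hεdef]; field_simp
  rw [heq] at this
  linarith

def Cone (𝒜 : Set (Set Ω)) (π : (Ω → ℝ) → ℝ) (τ : ℝ) (h : Ω → ℝ) (t : ℝ) : Prop :=
  ∃ (N : ℕ) (lam : Fin N → ℝ) (B : Fin N → Set Ω),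
    (∀ i, 0 ≤ lam i) ∧ (∀ i, B i ∈ 𝒜) ∧ (∀ i, τ ≤ π (ind (B i))) ∧
    h = ∑ i, lam i • ind (B i) ∧ t = ∑ i, lam i

variable {τ : ℝ}

lemma cone_zero : Cone 𝒜 π τ 0 0 :=
  ⟨0, fun i => i.elim0, fun i => i.elim0, fun i => i.elim0, fun i => i.elim0,
    fun i => i.elim0, by simp, by simp⟩

lemma cone_single {B : Set Ω} (hB : B ∈ 𝒜) (hBτ : τ ≤ π (ind B)) : Cone 𝒜 π τ (ind B) 1 :=
  ⟨1, fun _ => 1, fun _ => B, fun _ => zero_le_one, fun _ => hB, fun _ => hBτ,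
    by simp, by simp⟩

lemma Cone.memL {h : Ω → ℝ} {t : ℝ} (hc : Cone 𝒜 π τ h t) : h ∈ LSpan 𝒜 := by
  obtain ⟨N, lam, B, _, hB, _, hh, _⟩ := hc
  rw [hh]
  exact Submodule.sum_mem _ fun i _ => Submodule.smul_mem _ _ (KelleyAux.memL (hB i))

lemma Cone.t_nonneg {h : Ω → ℝ} {t : ℝ} (hc : Cone 𝒜 π τ h t) : 0 ≤ t := by
  obtain ⟨N, lam, B, hlam, _, _, _, ht⟩ := hc
  rw [ht]
  exact Finset.sum_nonneg fun i _ => hlam i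

lemma Cone.add {h₁ h₂ : Ω → ℝ} {t₁ t₂ : ℝ} (hc₁ : Cone 𝒜 π τ h₁ t₁)
    (hc₂ : Cone 𝒜 π τ h₂ t₂) : Cone 𝒜 π τ (h₁ + h₂) (t₁ + t₂) := by
  obtain ⟨N₁, lam₁, B₁, hlam₁, hB₁, hBτ₁, hh₁, ht₁⟩ := hc₁
  obtain ⟨N₂, lam₂, B₂, hlam₂, hB₂, hBτ₂, hh₂, ht₂⟩ := hc₂
  refine ⟨N₁ + N₂, Fin.addCases lam₁ lam₂, Fin.addCases B₁ B₂, ?_, ?_, ?_, ?_, ?_⟩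
  · intro i
    refine Fin.addCases (fun j => ?_) (fun j => ?_) i <;>
      simp [Fin.addCases_left, Fin.addCases_right, hlam₁, hlam₂]
  · intro i
    refine Fin.addCases (fun j => ?_) (fun j => ?_) i <;>
      simp [Fin.addCases_left, Fin.addCases_right, hB₁, hB₂]
  · intro i
    refine Fin.addCases (fun j => ?_) (fun j => ?_) i <;>
      simp [Fin.addCases_left, Fin.addCases_right, hBτ₁, hBτ₂]
  · rw [hh₁, hh₂, Fin.sum_univ_add]
    simp [Fin.addCases_left, Fin.addCases_right]
  · rw [ht₁, ht₂, Fin.sum_univ_add]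
    simp [Fin.addCases_left, Fin.addCases_right]

lemma Cone.smul {h : Ω → ℝ} {t : ℝ} {c : ℝ} (hc0 : 0 ≤ c) (hc : Cone 𝒜 π τ h t) :
    Cone 𝒜 π τ (c • h) (c * t) := by
  obtain ⟨N, lam, B, hlam, hB, hBτ, hh, ht⟩ := hc
  refine ⟨N, fun i => c * lam i, B, fun i => mul_nonneg hc0 (hlam i), hB, hBτ, ?_, ?_⟩
  · rw [hh, Finset.smul_sum]
    exact Finset.sum_congr rfl fun i _ => (mul_smul _ _ _).symm
  · rw [ht, Finset.mul_sum]

lemma cone_key (hmono : MonotoneOnL 𝒜 π) (hsub : SublinearOnL 𝒜 π) (M : ℝ) (hM0 : 0 ≤ M)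
    (hLX : ∀ (N : ℕ) (a : Fin N → ℝ) (f : Fin N → Ω → ℝ),
      (∀ i, 0 ≤ a i) → (∑ i, a i) = 1 → (∀ i, f i ∈ LSpan 𝒜) → (∀ i, 0 ≤ f i) →
      (∑ i, a i * π (f i)) ≤ (1 + M) * π (∑ i, a i • f i))
    {h : Ω → ℝ} {t : ℝ} (hc : Cone 𝒜 π τ h t) : τ / (1 + M) * t ≤ π h := by
  have h1M : (0:ℝ) < 1 + M := by linarith
  have htn := hc.t_nonneg
  have hL := hc.memL
  obtain ⟨N, lam, B, hlam, hB, hBτ, hh, ht⟩ := hc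
  rcases eq_or_lt_of_le htn with hteq | htpos
  · have hall : ∀ i ∈ Finset.univ, lam i = 0 := by
      rw [← Finset.sum_eq_zero_iff_of_nonneg (fun i _ => hlam i), ← ht, ← hteq]
    have hh0 : h = 0 := by
      rw [hh]
      refine Finset.sum_eq_zero fun i hi => ?_
      rw [hall i hi, zero_smul]
    rw [hh0, pi_zero hsub, ← hteq, mul_zero]
  · have htne : t ≠ 0 := ne_of_gt htpos
    set a : Fin N → ℝ := fun i => lam i / t with ha
    set f : Fin N → Ω → ℝ := fun i => ind (B i) with hf
    have ha0 : ∀ i, 0 ≤ a i := fun i => div_nonneg (hlam i) htn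
    have hasum : ∑ i, a i = 1 := by
      rw [ha]
      simp only
      rw [← Finset.sum_div, ← ht, div_self htne]
    have hfL : ∀ i, f i ∈ LSpan 𝒜 := fun i => KelleyAux.memL (hB i)
    have hf0 : ∀ i, 0 ≤ f i := fun i => ind_nonneg _
    have hkey := hLX N a f ha0 hasum hfL hf0
    have hsa : (∑ i, a i • f i) = t⁻¹ • h := by
      rw [hh, Finset.smul_sum]
      refine Finset.sum_congr rfl fun i _ => ?_
      rw [smul_smul, ha, hf]
      simp only
      rw [div_eq_inv_mul]
    have hτle : τ ≤ ∑ i, a i * π (f i) := by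
      have : τ = ∑ i, a i * τ := by rw [← Finset.sum_mul, hasum, one_mul]
      rw [this]
      exact Finset.sum_le_sum fun i _ => mul_le_mul_of_nonneg_left (hBτ i) (ha0 i)
    have hπinvh : π (t⁻¹ • h) = t⁻¹ * π h := hsub.2 t⁻¹ (inv_nonneg.mpr htn) h hL
    have h2 : τ ≤ (1 + M) * (t⁻¹ * π h) := by
      rw [← hπinvh, ← hsa]
      exact hτle.trans hkey
    rw [div_mul_eq_mul_div, div_le_iff₀ h1M]
    have h3 := mul_le_mul_of_nonneg_right h2 htn
    have h4 : (1 + M) * (t⁻¹ * π h) * t = (1 + M) * π h := by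
      field_simp
    rw [h4] at h3
    linarith

lemma kelley (h𝒜 : IsSetAlgebra 𝒜) (hmono : MonotoneOnL 𝒜 π) (hsub : SublinearOnL 𝒜 π)
    (M : ℝ) (hM0 : 0 ≤ M)
    (hLX : ∀ (N : ℕ) (a : Fin N → ℝ) (f : Fin N → Ω → ℝ),
      (∀ i, 0 ≤ a i) → (∑ i, a i) = 1 → (∀ i, f i ∈ LSpan 𝒜) → (∀ i, 0 ≤ f i) →
      (∑ i, a i * π (f i)) ≤ (1 + M) * π (∑ i, a i • f i))
    (τ : ℝ) :
    ∃ m : Set Ω → ℝ, (∀ A ∈ 𝒜, 0 ≤ m A) ∧ m ∅ = 0 ∧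
      (∀ A ∈ 𝒜, ∀ B ∈ 𝒜, Disjoint A B → m (A ∪ B) = m A + m B) ∧
      (∀ A ∈ 𝒜, m A ≤ π (ind A)) ∧
      ∀ B ∈ 𝒜, τ ≤ π (ind B) → τ / (1 + M) ≤ m B := by
  classical
  set δ : ℝ := τ / (1 + M) with hδ
  set S : (Ω → ℝ) → Set ℝ :=
    fun f => {r | ∃ h t, Cone 𝒜 π τ h t ∧ r = π (f + h) - δ * t} with hSdef
  have hmemS : ∀ f : Ω → ℝ, π f ∈ S f := fun f => ⟨0, 0, cone_zero, by simp⟩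
  have hkeyδ : ∀ {h : Ω → ℝ} {t : ℝ}, Cone 𝒜 π τ h t → δ * t ≤ π h := by
    intro h t hc
    rw [hδ]
    exact cone_key hmono hsub M hM0 hLX hc
  have hbdd : ∀ f ∈ LSpan 𝒜, ∀ r ∈ S f, -π (-f) ≤ r := by
    intro f hf r hr
    obtain ⟨h, t, hc, rfl⟩ := hr
    have hkey := hkeyδ hc
    have hhL := hc.memL
    have h1 : π h ≤ π (f + h) + π (-f) := by
      have he : h = (f + h) + (-f) := by abel
      calc π h = π ((f + h) + (-f)) := by rw [← he]
        _ ≤ _ := hsub.1 _ (Submodule.add_mem _ hf hhL) _ (Submodule.neg_mem _ hf)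
    linarith
  have hbddBelow : ∀ f ∈ LSpan 𝒜, BddBelow (S f) :=
    fun f hf => ⟨-π (-f), fun r hr => hbdd f hf r hr⟩
  set q : (Ω → ℝ) → ℝ := fun f => sInf (S f) with hq
  have hq_le : ∀ f ∈ LSpan 𝒜, ∀ r ∈ S f, q f ≤ r :=
    fun f hf r hr => csInf_le (hbddBelow f hf) hr
  have hq_le_pi : ∀ f ∈ LSpan 𝒜, q f ≤ π f := fun f hf => hq_le f hf _ (hmemS f)
  set NN : ↥(LSpan 𝒜) → ℝ := fun x => q ↑x with hNN
  have N_add : ∀ x y : ↥(LSpan 𝒜), NN (x + y) ≤ NN x + NN y := by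
    intro x y
    show q ((x : Ω → ℝ) + (y : Ω → ℝ)) ≤ q ↑x + q ↑y
    have H : ∀ r1 ∈ S ↑x, ∀ r2 ∈ S ↑y, q ((x : Ω → ℝ) + ↑y) ≤ r1 + r2 := by
      rintro r1 ⟨h1, t1, hc1, rfl⟩ r2 ⟨h2, t2, hc2, rfl⟩
      have hmem : π (((x : Ω → ℝ) + ↑y) + (h1 + h2)) - δ * (t1 + t2) ∈ S ((x : Ω → ℝ) + ↑y) :=
        ⟨h1 + h2, t1 + t2, hc1.add hc2, rfl⟩
      have hle := hq_le _ (Submodule.add_mem _ x.2 y.2) _ hmem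
      have hπ : π (((x : Ω → ℝ) + ↑y) + (h1 + h2)) ≤ π ((x : Ω → ℝ) + h1) + π ((y : Ω → ℝ) + h2) := by
        have he : ((x : Ω → ℝ) + ↑y) + (h1 + h2) = ((x : Ω → ℝ) + h1) + ((y : Ω → ℝ) + h2) := by
          abel
        rw [he]
        exact hsub.1 _ (Submodule.add_mem _ x.2 hc1.memL) _ (Submodule.add_mem _ y.2 hc2.memL)
      linarith
    have h1 : ∀ r1 ∈ S ↑x, q ((x : Ω → ℝ) + ↑y) - r1 ≤ q ↑y :=
      fun r1 hr1 => le_csInf ⟨_, hmemS ↑y⟩ fun r2 hr2 => by linarith [H r1 hr1 r2 hr2]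
    have h2 : q ((x : Ω → ℝ) + ↑y) - q ↑y ≤ q ↑x :=
      le_csInf ⟨_, hmemS ↑x⟩ fun r1 hr1 => by linarith [h1 r1 hr1]
    linarith
  have N_hom : ∀ c : ℝ, 0 < c → ∀ x : ↥(LSpan 𝒜), NN (c • x) = c * NN x := by
    intro c hc x
    show q (c • (x : Ω → ℝ)) = c * q ↑x
    have hSeq : S (c • (x : Ω → ℝ)) = c • S ↑x := by
      ext r
      constructor
      · rintro ⟨h, t, hcone, rfl⟩
        refine Set.mem_smul_set.mpr
          ⟨π ((x : Ω → ℝ) + c⁻¹ • h) - δ * (c⁻¹ * t),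
            ⟨c⁻¹ • h, c⁻¹ * t, Cone.smul (inv_nonneg.mpr hc.le) hcone, rfl⟩, ?_⟩
        have he : c • ((x : Ω → ℝ) + c⁻¹ • h) = c • (x : Ω → ℝ) + h := by
          rw [smul_add, smul_inv_smul₀ (ne_of_gt hc)]
        have hπe : π (c • (x : Ω → ℝ) + h) = c * π ((x : Ω → ℝ) + c⁻¹ • h) := by
          rw [← he, hsub.2 c hc.le _
            (Submodule.add_mem _ x.2 (Submodule.smul_mem _ _ hcone.memL))]
        rw [smul_eq_mul, hπe]
        field_simp
      · intro hr
        obtain ⟨r', hr', rfl⟩ := Set.mem_smul_set.mp hr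
        obtain ⟨h, t, hcone, rfl⟩ := hr'
        refine ⟨c • h, c * t, Cone.smul hc.le hcone, ?_⟩
        have he : c • ((x : Ω → ℝ) + h) = c • (x : Ω → ℝ) + c • h := smul_add _ _ _
        have hπe : π (c • (x : Ω → ℝ) + c • h) = c * π ((x : Ω → ℝ) + h) := by
          rw [← he, hsub.2 c hc.le _ (Submodule.add_mem _ x.2 hcone.memL)]
        rw [smul_eq_mul, hπe]
        ring
    show sInf (S (c • (x : Ω → ℝ))) = c * sInf (S ↑x)
    rw [hSeq, Real.sInf_smul_of_nonneg hc.le, smul_eq_mul]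
  have q0 : 0 ≤ q 0 := by
    refine le_csInf ⟨_, hmemS 0⟩ ?_
    rintro r ⟨h, t, hc, rfl⟩
    have := hkeyδ hc
    rw [zero_add]
    linarith
  set f₀ : ↥(LSpan 𝒜) →ₗ.[ℝ] ℝ := ⟨⊥, 0⟩ with hf₀def
  have hf₀ : ∀ x : f₀.domain, f₀ x ≤ NN ↑x := by
    intro x
    have hx0 : ((x : ↥(LSpan 𝒜))) = 0 := (Submodule.mem_bot ℝ).mp x.2
    have h1 : f₀ x = 0 := rfl
    rw [h1, hx0]
    show (0:ℝ) ≤ q ((0 : ↥(LSpan 𝒜)) : Ω → ℝ)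
    rw [ZeroMemClass.coe_zero]
    exact q0
  obtain ⟨g, -, hg⟩ := exists_extension_of_le_sublinear f₀ NN N_hom N_add hf₀
  refine ⟨fun A => if hA : A ∈ 𝒜 then g ⟨ind A, KelleyAux.memL hA⟩ else 0, ?_, ?_, ?_, ?_, ?_⟩
  · -- nonneg
    intro A hA
    simp only [dif_pos hA]
    have h1 : g (-⟨ind A, KelleyAux.memL hA⟩) ≤ q (-(ind A)) := hg _
    have h2 : q (-(ind A)) ≤ π (-(ind A)) :=
      hq_le_pi _ (Submodule.neg_mem _ (KelleyAux.memL hA))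
    have h3 : π (-(ind A)) ≤ 0 := by
      have := hmono _ (Submodule.neg_mem _ (KelleyAux.memL hA)) 0 (Submodule.zero_mem _)
        (fun ω => neg_nonpos.mpr (ind_nonneg A ω))
      rwa [pi_zero hsub] at this
    have h4 : g (-⟨ind A, KelleyAux.memL hA⟩) = -g ⟨ind A, KelleyAux.memL hA⟩ := map_neg g _
    linarith
  · -- empty
    have h0 : (⟨ind ∅, KelleyAux.memL h𝒜.1⟩ : ↥(LSpan 𝒜)) = 0 :=
      Subtype.ext (funext fun ω => by simp [ind])
    simp only [dif_pos h𝒜.1, h0, map_zero]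
  · -- additive
    intro A hA B hB hd
    have hU : A ∪ B ∈ 𝒜 := h𝒜.2.2.2 A hA B hB
    simp only [dif_pos hU, dif_pos hA, dif_pos hB]
    rw [← map_add]
    congr 1
    refine Subtype.ext ?_
    show ind (A ∪ B) = ind A + ind B
    simp only [ind]
    rw [Set.indicator_union_of_disjoint hd]
    rfl
  · -- dominated
    intro A hA
    simp only [dif_pos hA]
    exact (hg _).trans (hq_le_pi _ (KelleyAux.memL hA))
  · -- level
    intro B hB hτB
    simp only [dif_pos hB]
    have hc1 := cone_single hB hτB
    have hmem : π (-(ind B) + ind B) - δ * 1 ∈ S (-(ind B)) := ⟨ind B, 1, hc1, rfl⟩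
    have hval : π (-(ind B) + ind B) - δ * 1 = -δ := by
      rw [neg_add_cancel, pi_zero hsub]
      ring
    have h1 : q (-(ind B)) ≤ -δ := by
      rw [← hval]
      exact hq_le _ (Submodule.neg_mem _ (KelleyAux.memL hB)) _ hmem
    have h2 : g (-⟨ind B, KelleyAux.memL hB⟩) ≤ q (-(ind B)) := hg _
    have h3 : g (-⟨ind B, KelleyAux.memL hB⟩) = -g ⟨ind B, KelleyAux.memL hB⟩ := map_neg g _
    linarith

end KelleyAux

/-- If `π` is monotone and sublinear on `L(𝒜)` and the nonlinearity index
`𝔪(π) = sup (Σᵢ aᵢ π(fᵢ) - π(Σᵢ aᵢ fᵢ)) / π(Σᵢ aᵢ fᵢ)` — the supremum over all convex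
combinations of nonnegative elements of `L(𝒜)` with `π(Σᵢ aᵢ fᵢ) > 0` — is finite
(i.e. the ratios are bounded above by some `M`), then there exists a strictly
`π`-positive, `π`-dominated nonnegative finitely additive set function on `𝒜`. -/
theorem exists_dominated_of_bounded_nonlinarity {Ω : Type*} [Nonempty Ω]
    (𝒜 : Set (Set Ω)) (h𝒜 : IsSetAlgebra 𝒜) (π : (Ω → ℝ) → ℝ)
    (hmono : MonotoneOnL 𝒜 π) (hsub : SublinearOnL 𝒜 π)
    (hfin : ∃ M : ℝ, ∀ (N : ℕ) (a : Fin N → ℝ) (f : Fin N → Ω → ℝ),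
      (∀ i, 0 ≤ a i) → (∑ i, a i) = 1 → (∀ i, f i ∈ LSpan 𝒜) → (∀ i, 0 ≤ f i) →
      0 < π (∑ i, a i • f i) →
      ((∑ i, a i * π (f i)) - π (∑ i, a i • f i)) / π (∑ i, a i • f i) ≤ M) :
    ∃ m : Set Ω → ℝ, IsFANonneg 𝒜 m ∧ PiDominated 𝒜 π m ∧ StrictlyPiPositive 𝒜 π m := by
  classical
  obtain ⟨M₀, hfin⟩ := hfin
  set M : ℝ := max M₀ 0 with hM
  have hM0 : 0 ≤ M := le_max_right _ _
  have hpinn : ∀ A ∈ 𝒜, 0 ≤ π (KelleyAux.ind A) := fun A hA =>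
    KelleyAux.pi_nonneg hmono hsub (KelleyAux.memL hA) (KelleyAux.ind_nonneg A)
  by_cases hπ1 : 0 < π (KelleyAux.ind (Set.univ : Set Ω))
  · -- main case
    have hfin' : ∀ (N : ℕ) (a : Fin N → ℝ) (f : Fin N → Ω → ℝ),
        (∀ i, 0 ≤ a i) → (∑ i, a i) = 1 → (∀ i, f i ∈ LSpan 𝒜) → (∀ i, 0 ≤ f i) →
        0 < π (∑ i, a i • f i) →
        ((∑ i, a i * π (f i)) - π (∑ i, a i • f i)) / π (∑ i, a i • f i) ≤ M :=
      fun N a f h1 h2 h3 h4 h5 => (hfin N a f h1 h2 h3 h4 h5).trans (le_max_left _ _)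
    have hLX := KelleyAux.lemX h𝒜 hmono hsub M hM0 hfin' hπ1
    choose ms hms using fun n : ℕ =>
      KelleyAux.kelley h𝒜 hmono hsub M hM0 hLX (1 / ((n : ℝ) + 1))
    have hms1 : ∀ (n : ℕ), ∀ A ∈ 𝒜, 0 ≤ ms n A := fun n => (hms n).1
    have hms4 : ∀ (n : ℕ), ∀ A ∈ 𝒜, ms n A ≤ π (KelleyAux.ind A) := fun n => (hms n).2.2.2.1
    have hms5 : ∀ (n : ℕ), ∀ B ∈ 𝒜, 1 / ((n : ℝ) + 1) ≤ π (KelleyAux.ind B) →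
        (1 / ((n : ℝ) + 1)) / (1 + M) ≤ ms n B := fun n => (hms n).2.2.2.2
    have hsumc : ∀ C : ℝ, Summable (fun n : ℕ => (1/2 : ℝ)^(n+1) * C) := by
      intro C
      have hgeom : Summable (fun n : ℕ => (1/2 : ℝ)^n) :=
        summable_geometric_of_lt_one (by norm_num) (by norm_num)
      exact (hgeom.mul_right ((1/2) * C)).congr fun n => by ring
    have hsummable : ∀ A ∈ 𝒜, Summable (fun n : ℕ => (1/2 : ℝ)^(n+1) * ms n A) := by
      intro A hA
      exact Summable.of_nonneg_of_le
        (fun n => mul_nonneg (by positivity) (hms1 n A hA))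
        (fun n => mul_le_mul_of_nonneg_left (hms4 n A hA) (by positivity))
        (hsumc (π (KelleyAux.ind A)))
    have hgeosum : ∑' n : ℕ, (1/2 : ℝ)^(n+1) = 1 := by
      have h1 : ∀ n : ℕ, (1/2 : ℝ)^(n+1) = (1/2)^n * (1/2) := fun n => by ring
      calc ∑' n : ℕ, (1/2 : ℝ)^(n+1) = ∑' n : ℕ, (1/2 : ℝ)^n * (1/2) := tsum_congr h1
        _ = (∑' n : ℕ, (1/2 : ℝ)^n) * (1/2) := tsum_mul_right
        _ = 1 := by rw [tsum_geometric_two]; norm_num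
    refine ⟨fun A => ∑' n : ℕ, (1/2 : ℝ)^(n+1) * ms n A, ⟨?_, ?_, ?_⟩, ?_, ?_⟩
    · intro A hA
      exact tsum_nonneg fun n => mul_nonneg (by positivity) (hms1 n A hA)
    · have h1 : ∀ n : ℕ, (1/2 : ℝ)^(n+1) * ms n ∅ = 0 := fun n => by
        rw [(hms n).2.1, mul_zero]
      simp only
      rw [tsum_congr h1, tsum_zero]
    · intro A hA B hB hd
      have h1 : ∀ n : ℕ, (1/2 : ℝ)^(n+1) * ms n (A ∪ B)
          = (1/2)^(n+1) * ms n A + (1/2)^(n+1) * ms n B := fun n => by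
        rw [(hms n).2.2.1 A hA B hB hd]; ring
      simp only
      rw [tsum_congr h1]
      exact Summable.tsum_add (hsummable A hA) (hsummable B hB)
    · intro A hA
      have h1 : (∑' n : ℕ, (1/2 : ℝ)^(n+1) * ms n A)
          ≤ ∑' n : ℕ, (1/2 : ℝ)^(n+1) * π (KelleyAux.ind A) :=
        Summable.tsum_le_tsum (fun n => mul_le_mul_of_nonneg_left (hms4 n A hA) (by positivity))
          (hsummable A hA) (hsumc _)
      have h2 : (∑' n : ℕ, (1/2 : ℝ)^(n+1) * π (KelleyAux.ind A)) = π (KelleyAux.ind A) := by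
        rw [tsum_mul_right, hgeosum, one_mul]
      exact h1.trans_eq h2
    · intro A hA hmA
      simp only at hmA
      have hterm0 : ∀ n : ℕ, ms n A = 0 := by
        intro n
        have h1 : (1/2 : ℝ)^(n+1) * ms n A ≤ ∑' k : ℕ, (1/2 : ℝ)^(k+1) * ms k A :=
          Summable.le_tsum (hsummable A hA) n fun j _ => mul_nonneg (by positivity) (hms1 j A hA)
        rw [hmA] at h1
        have h2 : 0 ≤ (1/2 : ℝ)^(n+1) * ms n A :=
          mul_nonneg (by positivity) (hms1 n A hA)
        have h3 : (1/2 : ℝ)^(n+1) * ms n A = 0 := le_antisymm h1 h2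
        have h4 : ((1/2 : ℝ)^(n+1)) ≠ 0 := by positivity
        exact (mul_eq_zero.mp h3).resolve_left h4
      have hlt : ∀ n : ℕ, π (KelleyAux.ind A) < 1 / ((n : ℝ) + 1) := by
        intro n
        by_contra hcon
        push_neg at hcon
        have h5 := hms5 n A hA hcon
        rw [hterm0 n] at h5
        have hpos : 0 < (1 / ((n : ℝ) + 1)) / (1 + M) :=
          div_pos (by positivity) (by linarith)
        linarith
      have h0 : π (KelleyAux.ind A) ≤ 0 := by
        by_contra hcon
        push_neg at hcon
        obtain ⟨n, hn⟩ := exists_nat_one_div_lt hcon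
        exact absurd (hlt n) (not_lt.mpr hn.le)
      exact le_antisymm h0 (hpinn A hA)
  · -- degenerate case : π vanishes on all indicators
    push_neg at hπ1
    have hzero : ∀ A ∈ 𝒜, π (KelleyAux.ind A) = 0 := by
      intro A hA
      have h1 : π (KelleyAux.ind A) ≤ π (KelleyAux.ind (Set.univ : Set Ω)) :=
        hmono _ (KelleyAux.memL hA) _ (KelleyAux.memL h𝒜.2.1) (KelleyAux.ind_le_univ A)
      exact le_antisymm (h1.trans hπ1) (hpinn A hA)
    exact ⟨fun _ => 0, ⟨fun A _ => le_rfl, rfl, fun _ _ _ _ _ => by ring⟩,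
      fun A hA => (hzero A hA).ge, fun A hA _ => hzero A hA⟩
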